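/- Let α ≥ 1 and l ∈ ℕ. Then Ξ_l^α ≠ ∅ if and only if l ≤ ⌈α/2⌉. -/

import Mathlib

/-- The generator `p` of the infinite dihedral group `C₂ * C₂`, realized as the
reflection `sr 0` in `DihedralGroup 0`. -/
def pgen : DihedralGroup 0 := DihedralGroup.sr 0

/-- The generator `q` of the infinite dihedral group `C₂ * C₂`, realized as the
reflection `sr 1` in `DihedralGroup 0`. -/
def qgen : DihedralGroup 0 := DihedralGroup.sr 1

/-- `g^b` for a bit `b`: `g⁰ = 1`, `g¹ = g`. -/
def bpow (g : DihedralGroup 0) (b : Bool) : DihedralGroup 0 := if b then g else 1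

/-- The generator at (0-based) index `i`, i.e. at 1-based position `i+1`:
`q` at odd positions, `p` at even positions. -/
def genAt (i : ℕ) : DihedralGroup 0 := if i % 2 = 0 then qgen else pgen

/-- The word `w(x) = r_n^{x_n} ⋯ r_2^{x_2} r_1^{x_1}` associated with a bit string
`x = x₁…x_n`, where `r_i = q` if `i` is odd and `r_i = p` if `i` is even. -/
def wword {n : ℕ} (x : Fin n → Bool) : DihedralGroup 0 :=
  ((List.finRange n).reverse.map (fun i => bpow (genAt i.val) (x i))).prod

/-- The reduced word `t(u,k,v) = p^u (qp)^k q^v`. -/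
def tword (u : Bool) (k : ℕ) (v : Bool) : DihedralGroup 0 :=
  bpow pgen u * (qgen * pgen) ^ k * bpow qgen v

/-- `Θⁿ_{ukv}` : the set of bit strings `x` of length `n` with `w(x) = p^u (qp)^k q^v`,
empty by convention when `k < 0`. -/
def Theta (n : ℕ) (u : Bool) (k : ℤ) (v : Bool) : Finset (Fin n → Bool) :=
  if k < 0 then ∅ else Finset.univ.filter (fun x => wword x = tword u k.toNat v)

/-- `Ξ_l^α = Θ^α_{0,l,0} ∪ Θ^α_{1,l,0} ∪ Θ^α_{0,l−1,1} ∪ Θ^α_{1,l−1,1}`. -/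
def Xi (α l : ℕ) : Finset (Fin α → Bool) :=
  Theta α false l false ∪ Theta α true l false ∪
    Theta α false ((l : ℤ) - 1) true ∪ Theta α true ((l : ℤ) - 1) true

-- auxiliary lemmas

lemma wword_succ (n : ℕ) (x : Fin (n+1) → Bool) :
    wword x = bpow (genAt n) (x (Fin.last n)) * wword (fun i => x i.castSucc) := by
  unfold wword
  rw [List.finRange_succ_last]
  simp [List.map_reverse, List.map_map, Function.comp_def, mul_comm]

lemma qp_pow (k : ℕ) : (qgen * pgen) ^ k = DihedralGroup.r (-(k : ℤ)) := by
  induction k with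
  | zero => simp; rfl
  | succ k ih =>
    rw [pow_succ, ih]
    exact congrArg DihedralGroup.r (by push_cast; ring : (-(k:ℤ)) + (0 - 1) = -((k:ℕ)+1:ℤ))

lemma tword_ff (k : ℕ) : tword false k false = DihedralGroup.r (-(k : ℤ)) := by
  unfold tword; rw [qp_pow]
  exact congrArg DihedralGroup.r (by ring : (0 : ℤ) + -(k:ℤ) + 0 = -(k:ℤ))

lemma tword_tf (k : ℕ) : tword true k false = DihedralGroup.sr (-(k : ℤ)) := by
  unfold tword; rw [qp_pow]
  exact congrArg DihedralGroup.sr (by ring : (0 : ℤ) + -(k:ℤ) + 0 = -(k:ℤ))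

lemma tword_ft (k : ℕ) : tword false k true = DihedralGroup.sr ((k : ℤ) + 1) := by
  unfold tword; rw [qp_pow]
  exact congrArg DihedralGroup.sr (by ring : (1 : ℤ) - (0 + -(k:ℤ)) = (k:ℤ) + 1)

lemma tword_tt (k : ℕ) : tword true k true = DihedralGroup.r ((k : ℤ) + 1) := by
  unfold tword; rw [qp_pow]
  exact congrArg DihedralGroup.r (by ring : (1 : ℤ) - (0 + -(k:ℤ)) = (k:ℤ) + 1)

lemma wword_form (n : ℕ) : ∀ x : Fin n → Bool,
    ∃ a : ℤ, (wword x = DihedralGroup.r a ∧ -(n:ℤ) ≤ 2*a ∧ 2*a ≤ n) ∨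
             (wword x = DihedralGroup.sr a ∧ 1-(n:ℤ) ≤ 2*a ∧ 2*a ≤ n+1) := by
  induction n with
  | zero =>
    intro x
    refine ⟨0, Or.inl ⟨?_, by norm_num⟩⟩
    show _ = (1 : DihedralGroup 0)
    simp [wword]
  | succ n ih =>
    intro x
    obtain ⟨a, ha⟩ := ih (fun i => x i.castSucc)
    have hws := wword_succ n x
    by_cases hn : n % 2 = 0 <;> cases hb : x (Fin.last n) <;>
      rw [hb] at hws <;>
      rcases ha with ⟨hw, h1, h2⟩ | ⟨hw, h1, h2⟩ <;>
      rw [hw] at hws <;>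
      simp only [genAt, bpow, hn, qgen, pgen, if_true, if_false, ite_true, ite_false,
        Bool.false_eq_true, one_mul] at hws <;>
      first
        | exact ⟨a, Or.inl ⟨hws, by push_cast; omega⟩⟩
        | exact ⟨a, Or.inr ⟨hws, by push_cast; omega⟩⟩
        | exact ⟨(1:ℤ) + a, Or.inr ⟨hws, by push_cast; omega⟩⟩
        | exact ⟨a - 1, Or.inl ⟨hws, by push_cast; omega⟩⟩
        | exact ⟨(0:ℤ) + a, Or.inr ⟨hws, by push_cast; omega⟩⟩
        | exact ⟨a - 0, Or.inl ⟨hws, by push_cast; omega⟩⟩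

lemma wword_allones (n : ℕ) : wword (fun _ : Fin n => true) =
    if n % 2 = 0 then DihedralGroup.r ((n / 2 : ℕ) : ℤ)
    else DihedralGroup.sr (((n / 2 : ℕ) : ℤ) + 1) := by
  induction n with
  | zero =>
    simp only [Nat.zero_mod, if_pos rfl]
    show (1 : DihedralGroup 0) = _
    norm_num
    exact DihedralGroup.one_def
  | succ n ih =>
    simp only [wword_succ]
    rw [ih]
    by_cases hn : n % 2 = 0
    · rw [if_pos hn, if_neg (by omega : ¬ (n+1) % 2 = 0)]
      simp only [genAt, bpow, hn, qgen, if_true, ite_true]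
      exact congrArg DihedralGroup.sr
        (show (1 + ((n/2 : ℕ) : ℤ) : ℤ) = (((n+1)/2 : ℕ) : ℤ) + 1 by omega)
    · rw [if_neg hn, if_pos (by omega : (n+1) % 2 = 0)]
      simp only [genAt, bpow, hn, pgen, if_false, ite_true, ite_false]
      exact congrArg DihedralGroup.r
        (show (((n/2 : ℕ) : ℤ) + 1 - 0 : ℤ) = (((n+1)/2 : ℕ) : ℤ) by omega)

lemma wword_prefix (n : ℕ) : ∀ j ≤ n,
    wword (fun i : Fin n => decide (i.val < j)) = wword (fun _ : Fin j => true) := by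
  induction n with
  | zero =>
    intro j hj
    have : j = 0 := by omega
    subst this
    rfl
  | succ n ih =>
    intro j hj
    rcases Nat.eq_or_lt_of_le hj with rfl | hlt
    · congr 1
      funext i
      simp [i.isLt]
    · have hjn : j ≤ n := by omega
      rw [wword_succ]
      simp only [Fin.val_last, Fin.coe_castSucc]
      have h1 : decide (n < j) = false := by simp; omega
      rw [h1]
      simp only [bpow, Bool.false_eq_true, ite_false, one_mul]
      exact ih j hjn

/-- `Ξ_l^α ≠ ∅` iff `l ≤ ⌈α/2⌉`. -/
theorem statement14 (α : ℕ) (hα : 1 ≤ α) (l : ℕ) :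
    (Xi α l).Nonempty ↔ l ≤ (α + 1) / 2 := by
  constructor
  · rintro ⟨x, hx⟩
    obtain ⟨a, ha⟩ := wword_form α x
    have keyr : ∀ c : ℤ, wword x = DihedralGroup.r c → -(α:ℤ) ≤ 2*c ∧ 2*c ≤ α := by
      intro c hc
      rcases ha with ⟨hw, h1, h2⟩ | ⟨hw, h1, h2⟩
      · have hac : a = c := DihedralGroup.r.inj (hw.symm.trans hc)
        omega
      · exact absurd (hw.symm.trans hc) (by simp)
    have keys : ∀ c : ℤ, wword x = DihedralGroup.sr c → 1-(α:ℤ) ≤ 2*c ∧ 2*c ≤ α+1 := by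
      intro c hc
      rcases ha with ⟨hw, h1, h2⟩ | ⟨hw, h1, h2⟩
      · exact absurd (hw.symm.trans hc) (by simp)
      · have hac : a = c := DihedralGroup.sr.inj (hw.symm.trans hc)
        omega
    cases l with
    | zero => exact Nat.zero_le _
    | succ m =>
      have hm : ∀ u v (k : ℤ), ¬ k < 0 → x ∈ Theta α u k v → wword x = tword u k.toNat v := by
        intro u v k hk hxx
        rw [Theta, if_neg hk] at hxx
        simpa using hxx
      simp only [Xi, Finset.mem_union] at hx
      have ht1 : (((m+1 : ℕ) : ℤ)).toNat = m + 1 := by omega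
      have ht2 : (((m+1 : ℕ) : ℤ) - 1).toNat = m := by omega
      rcases hx with ((h1 | h1) | h1) | h1
      · have h := hm _ _ _ (by omega) h1
        rw [ht1, tword_ff] at h
        have := keyr _ h
        omega
      · have h := hm _ _ _ (by omega) h1
        rw [ht1, tword_tf] at h
        have := keys _ h
        omega
      · have h := hm _ _ _ (by omega) h1
        rw [ht2, tword_ft] at h
        have := keys _ h
        omega
      · have h := hm _ _ _ (by omega) h1
        rw [ht2, tword_tt] at h
        have := keyr _ h
        omega
  · intro hl
    have hl2 : 2 * l ≤ α + 1 := by omega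
    by_cases h2 : 2 * l ≤ α
    · refine ⟨fun i => decide (i.val < 2 * l), ?_⟩
      have hwp := wword_prefix α (2*l) h2
      rw [wword_allones, if_pos (by omega : (2*l) % 2 = 0)] at hwp
      cases l with
      | zero =>
        refine Finset.mem_union_left _ (Finset.mem_union_left _ (Finset.mem_union_left _ ?_))
        rw [Theta, if_neg (by omega)]
        refine Finset.mem_filter.mpr ⟨Finset.mem_univ _, ?_⟩
        rw [hwp, tword_ff]
        exact congrArg DihedralGroup.r
          (show ((2*0/2 : ℕ) : ℤ) = -(((((0:ℕ):ℤ)).toNat : ℕ) : ℤ) by omega)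
      | succ m =>
        refine Finset.mem_union_right _ ?_
        rw [Theta, if_neg (by omega)]
        refine Finset.mem_filter.mpr ⟨Finset.mem_univ _, ?_⟩
        rw [hwp, tword_tt]
        exact congrArg DihedralGroup.r
          (show ((2*(m+1)/2 : ℕ) : ℤ) = ((((((m+1):ℕ):ℤ) - 1).toNat : ℕ) : ℤ) + 1 by omega)
    · have h3 : 2 * l = α + 1 := by omega
      cases l with
      | zero => omega
      | succ m =>
        refine ⟨fun _ => true, ?_⟩
        have hwp := wword_allones α
        rw [if_neg (by omega : ¬ α % 2 = 0)] at hwp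
        refine Finset.mem_union_left _ (Finset.mem_union_right _ ?_)
        rw [Theta, if_neg (by omega)]
        refine Finset.mem_filter.mpr ⟨Finset.mem_univ _, ?_⟩
        rw [hwp, tword_ft]
        exact congrArg DihedralGroup.sr
          (show ((α/2 : ℕ) : ℤ) + 1 = ((((((m+1):ℕ):ℤ) - 1).toNat : ℕ) : ℤ) + 1 by omega)
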